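/- arXiv:2009.02740 — 2 statements merged into one kernel-verified Lean document; each statement's English description precedes it below -/
import Mathlib

section
/- Let ψ be σ-strongly convex on a nonempty compact convex set X ⊆ ℝ^d with mirror map Q and Fenchel coupling R. Then for all x ∈ X and all z, z' ∈ ℝ^d, R(x, z') ≤ R(x, z) + ⟨Q(z) − x, z' − z⟩ + ‖z' − z‖²/(2σ). -/
theorem stmt_2 {d : ℕ} (X : Set (EuclideanSpace ℝ (Fin d)))
    (hXne : X.Nonempty) (hXcpt : IsCompact X) (hXconv : Convex ℝ X)
    (σ : ℝ) (hσ : 0 < σ)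
    (ψ : EuclideanSpace ℝ (Fin d) → ℝ) (hψ : ContinuousOn ψ X)
    (hstrong : ∀ x ∈ X, ∀ y ∈ X, ∀ t ∈ Set.Icc (0:ℝ) 1,
      ψ (t • x + (1 - t) • y) ≤ t * ψ x + (1 - t) * ψ y - σ / 2 * t * (1 - t) * ‖x - y‖ ^ 2)
    (ψstar : EuclideanSpace ℝ (Fin d) → ℝ)
    (Q : EuclideanSpace ℝ (Fin d) → EuclideanSpace ℝ (Fin d))
    (hQmem : ∀ z, Q z ∈ X)
    (hψstar_le : ∀ z, ∀ x ∈ X, (inner ℝ (z) (x) : ℝ) - ψ x ≤ ψstar z)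
    (hψstar_eq : ∀ z, ψstar z = (inner ℝ (z) (Q z) : ℝ) - ψ (Q z))
    (R : EuclideanSpace ℝ (Fin d) → EuclideanSpace ℝ (Fin d) → ℝ)
    (hR : ∀ x z, R x z = ψ x + ψstar z - (inner ℝ (x) (z) : ℝ)) :
    ∀ x ∈ X, ∀ z z', R x z' ≤ R x z + (inner ℝ (Q z - x) (z' - z) : ℝ) + ‖z' - z‖ ^ 2 / (2 * σ) := by
  -- Key lemma: strong concavity of ⟨z,·⟩ - ψ at its maximizer Q z
  have key : ∀ z : EuclideanSpace ℝ (Fin d), ∀ y ∈ X,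
      (inner ℝ z y : ℝ) - ψ y + σ / 2 * ‖y - Q z‖ ^ 2 ≤ ψstar z := by
    intro z y hy
    rw [hψstar_eq z]
    set c : ℝ := ‖y - Q z‖ ^ 2 with hc
    have hc0 : 0 ≤ c := by positivity
    have h1 : ∀ t : ℝ, 0 < t → t ≤ 1 →
        (inner ℝ z y : ℝ) - ψ y + σ / 2 * c - ((inner ℝ z (Q z) : ℝ) - ψ (Q z)) ≤ σ / 2 * t * c := by
      intro t ht0 ht1
      have hmem : t • y + (1 - t) • Q z ∈ X :=
        hXconv hy (hQmem z) ht0.le (by linarith) (by ring)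
      have hs := hstrong y hy (Q z) (hQmem z) t ⟨ht0.le, ht1⟩
      have hle := hψstar_le z _ hmem
      rw [hψstar_eq z] at hle
      rw [← hc] at hs
      have hin : (inner ℝ z (t • y + (1 - t) • Q z) : ℝ)
          = t * (inner ℝ z y : ℝ) + (1 - t) * (inner ℝ z (Q z) : ℝ) := by
        simp only [inner_add_right, real_inner_smul_right]
      rw [hin] at hle
      have h3 : t * ((inner ℝ z y : ℝ) - ψ y - ((inner ℝ z (Q z) : ℝ) - ψ (Q z))
          + σ / 2 * (1 - t) * c) ≤ 0 := by nlinarith [hs, hle]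
      have h4 : (inner ℝ z y : ℝ) - ψ y - ((inner ℝ z (Q z) : ℝ) - ψ (Q z))
          + σ / 2 * (1 - t) * c ≤ 0 := by
        by_contra hcon
        push_neg at hcon
        nlinarith [mul_pos ht0 hcon]
      nlinarith
    refine le_of_forall_pos_le_add ?_
    intro ε hε
    set den : ℝ := σ / 2 * c + 1 with hden_def
    have hden : 0 < den := by positivity
    set t : ℝ := min 1 (ε / den) with htdef
    have ht0 : 0 < t := lt_min one_pos (div_pos hε hden)
    have ht1 : t ≤ 1 := min_le_left _ _
    have h := h1 t ht0 ht1
    have htle : t ≤ ε / den := min_le_right _ _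
    have hb : σ / 2 * t * c ≤ ε := by
      calc σ / 2 * t * c = (σ / 2 * c) * t := by ring
        _ ≤ den * (ε / den) :=
            mul_le_mul (by simp [hden_def]) htle ht0.le (by positivity)
        _ = ε := mul_div_cancel₀ _ (ne_of_gt hden)
    linarith
  intro x hx z z'
  have hkey := key z (Q z') (hQmem z')
  have cs : (inner ℝ (z' - z) (Q z' - Q z) : ℝ) ≤ ‖z' - z‖ * ‖Q z' - Q z‖ :=
    real_inner_le_norm _ _
  have young : ‖z' - z‖ * ‖Q z' - Q z‖ ≤ ‖z' - z‖ ^ 2 / (2 * σ) + σ / 2 * ‖Q z' - Q z‖ ^ 2 := by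
    rw [← sub_nonneg]
    have expand : ‖z' - z‖ ^ 2 / (2 * σ) + σ / 2 * ‖Q z' - Q z‖ ^ 2 - ‖z' - z‖ * ‖Q z' - Q z‖
        = (‖z' - z‖ - σ * ‖Q z' - Q z‖) ^ 2 / (2 * σ) := by
      field_simp
      ring
    rw [expand]
    positivity
  have e1 : (inner ℝ z' (Q z') : ℝ) = (inner ℝ z (Q z') : ℝ) + (inner ℝ (z' - z) (Q z) : ℝ)
      + (inner ℝ (z' - z) (Q z' - Q z) : ℝ) := by
    simp only [inner_sub_left, inner_sub_right]
    ring
  have e2 : (inner ℝ (Q z - x) (z' - z) : ℝ)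
      = (inner ℝ (z' - z) (Q z) : ℝ) - ((inner ℝ x z' : ℝ) - (inner ℝ x z : ℝ)) := by
    simp only [inner_sub_left, inner_sub_right]
    rw [real_inner_comm (Q z) z', real_inner_comm (Q z) z]
    ring
  rw [hR, hR, hψstar_eq z']
  have hkey' := hkey
  rw [hψstar_eq z] at hkey' ⊢
  linarith [hkey', cs, young, e1, e2]
end

section
/- (Robbins–Siegmund) Let (F_k) be a filtration and (v_k), (a_k), (b_k), (φ_k) nonnegative sequences of random variables adapted to (F_k) satisfying E[v_{k+1} | F_k] ≤ (1 + a_k) v_k + b_k − φ_k for all k. If Σ_k a_k < ∞ and Σ_k b_k < ∞ almost surely, then v_k converges almost surely to a finite random variable and Σ_k φ_k < ∞ almost surely. -/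
open MeasureTheory Filter

namespace RSaux

noncomputable def Y (x s : ℕ → ℝ) (M : ℝ) : ℕ → ℝ
  | 0 => x 0
  | k + 1 => Y x s M k + (if s (k + 1) ≤ M then x (k + 1) - x k else 0)

lemma Y_eq_of_le {x s : ℕ → ℝ} {M : ℝ} (hs : Monotone s) :
    ∀ k, s k ≤ M → Y x s M k = x k := by
  intro k
  induction k with
  | zero => intro _; rfl
  | succ k ih =>
    intro h
    have hk : s k ≤ M := le_trans (hs (Nat.le_succ _)) h
    simp [Y, ih hk, if_pos h]

lemma Y_exists {x s : ℕ → ℝ} {M : ℝ} (hs : Monotone s) (hM : 0 ≤ M) (hs0 : s 0 = 0) :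
    ∀ k, ∃ j ≤ k, Y x s M k = x j ∧ s j ≤ M := by
  intro k
  induction k with
  | zero => exact ⟨0, le_rfl, rfl, hs0 ▸ hM⟩
  | succ k ih =>
    by_cases h : s (k + 1) ≤ M
    · exact ⟨k + 1, le_rfl, Y_eq_of_le hs (k + 1) h, h⟩
    · obtain ⟨j, hj, hY, hsj⟩ := ih
      exact ⟨j, le_trans hj (Nat.le_succ _), by simp [Y, if_neg h, hY], hsj⟩

lemma Y_ge {x s : ℕ → ℝ} {M : ℝ} (hs : Monotone s) (hM : 0 ≤ M) (hs0 : s 0 = 0)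
    (hx : ∀ k, -s k ≤ x k) (k : ℕ) : -M ≤ Y x s M k := by
  obtain ⟨j, _, hY, hsj⟩ := Y_exists hs hM hs0 k
  rw [hY]
  exact le_trans (neg_le_neg hsj) (hx j)

end RSaux

theorem stmt_10 {Ω : Type*} {m0 : MeasurableSpace Ω} (μ : Measure Ω) [IsProbabilityMeasure μ]
    (ℱ : Filtration ℕ m0)
    (v a b φ : ℕ → Ω → ℝ)
    (hv_nonneg : ∀ k, 0 ≤ᵐ[μ] v k) (ha_nonneg : ∀ k, 0 ≤ᵐ[μ] a k)
    (hb_nonneg : ∀ k, 0 ≤ᵐ[μ] b k) (hφ_nonneg : ∀ k, 0 ≤ᵐ[μ] φ k)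
    (hv_adapted : Adapted ℱ v) (ha_adapted : Adapted ℱ a)
    (hb_adapted : Adapted ℱ b) (hφ_adapted : Adapted ℱ φ)
    (hv_int : ∀ k, Integrable (v k) μ) (ha_int : ∀ k, Integrable (a k) μ)
    (hb_int : ∀ k, Integrable (b k) μ) (hφ_int : ∀ k, Integrable (φ k) μ)
    (hrec : ∀ k, μ[v (k + 1) | ℱ k] ≤ᵐ[μ]
      fun ω => (1 + a k ω) * v k ω + b k ω - φ k ω)
    (ha_sum : ∀ᵐ ω ∂μ, Summable fun k => a k ω)
    (hb_sum : ∀ᵐ ω ∂μ, Summable fun k => b k ω) :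
    ∀ᵐ ω ∂μ, (∃ l : ℝ, Tendsto (fun k => v k ω) atTop (nhds l)) ∧
      Summable fun k => φ k ω := by
  classical
  -- everywhere-nonnegative versions
  set v' : ℕ → Ω → ℝ := fun k ω => max (v k ω) 0 with hv'def
  set a' : ℕ → Ω → ℝ := fun k ω => max (a k ω) 0 with ha'def
  set b' : ℕ → Ω → ℝ := fun k ω => max (b k ω) 0 with hb'def
  set φ' : ℕ → Ω → ℝ := fun k ω => max (φ k ω) 0 with hφ'def
  -- the product normalizer
  set A : ℕ → Ω → ℝ := fun k ω => ∏ j ∈ Finset.range k, (1 + a' j ω) with hAdef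
  have ha'_nonneg : ∀ k ω, 0 ≤ a' k ω := fun k ω => le_max_right _ _
  have hv'_nonneg : ∀ k ω, 0 ≤ v' k ω := fun k ω => le_max_right _ _
  have hb'_nonneg : ∀ k ω, 0 ≤ b' k ω := fun k ω => le_max_right _ _
  have hφ'_nonneg : ∀ k ω, 0 ≤ φ' k ω := fun k ω => le_max_right _ _
  have hAsucc' : ∀ k ω, A (k + 1) ω = A k ω * (1 + a' k ω) := fun k ω =>
    Finset.prod_range_succ _ _
  have hA1 : ∀ k ω, 1 ≤ A k ω := by
    intro k ω
    induction k with
    | zero => simp [hAdef]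
    | succ k ih =>
      rw [hAsucc']
      nlinarith [ha'_nonneg k ω]
  have hApos : ∀ k ω, 0 < A k ω := fun k ω => lt_of_lt_of_le one_pos (hA1 k ω)
  have hAmono : ∀ ω, Monotone fun k => A k ω := by
    intro ω
    refine monotone_nat_of_le_succ fun k => ?_
    rw [hAsucc']
    nlinarith [ha'_nonneg k ω, hApos k ω]
  -- normalized processes
  set u : ℕ → Ω → ℝ := fun k ω => (A k ω)⁻¹ * v' k ω with hudef
  set β : ℕ → Ω → ℝ := fun k ω => (A (k + 1) ω)⁻¹ * b' k ω with hβdef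
  set ψ : ℕ → Ω → ℝ := fun k ω => (A (k + 1) ω)⁻¹ * φ' k ω with hψdef
  set S : ℕ → Ω → ℝ := fun k ω => ∑ j ∈ Finset.range k, β j ω with hSdef
  set P : ℕ → Ω → ℝ := fun k ω => ∑ j ∈ Finset.range k, ψ j ω with hPdef
  set X : ℕ → Ω → ℝ := fun k ω => u k ω + P k ω - S k ω with hXdef
  -- strong measurability
  have hv'_sm : ∀ k, StronglyMeasurable[ℱ k] (v' k) := fun k =>
    ((hv_adapted k).max measurable_const).stronglyMeasurable
  have ha'_sm : ∀ k, StronglyMeasurable[ℱ k] (a' k) := fun k =>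
    ((ha_adapted k).max measurable_const).stronglyMeasurable
  have hb'_sm : ∀ k, StronglyMeasurable[ℱ k] (b' k) := fun k =>
    ((hb_adapted k).max measurable_const).stronglyMeasurable
  have hφ'_sm : ∀ k, StronglyMeasurable[ℱ k] (φ' k) := fun k =>
    ((hφ_adapted k).max measurable_const).stronglyMeasurable
  have hA_sm : ∀ n k, n ≤ k + 1 → StronglyMeasurable[ℱ k] (A n) := by
    intro n
    induction n with
    | zero =>
      intro k _
      have : A 0 = fun _ => (1 : ℝ) := funext fun ω => by simp [hAdef]
      rw [this]; exact stronglyMeasurable_const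
    | succ n ih =>
      intro k hk
      have hnk : n ≤ k := Nat.lt_succ_iff.mp hk
      have : A (n + 1) = fun ω => A n ω * (1 + a' n ω) := funext fun ω => hAsucc' n ω
      rw [this]
      exact ((ih k (le_trans hnk (Nat.le_succ _))).measurable.mul
        ((measurable_const.add ((ha'_sm n).measurable.mono (ℱ.mono hnk) le_rfl)))).stronglyMeasurable
  have hu_sm : ∀ k, StronglyMeasurable[ℱ k] (u k) := fun k =>
    (((hA_sm k k (Nat.le_succ _)).measurable.inv).mul (hv'_sm k).measurable).stronglyMeasurable
  have hβ_sm : ∀ k, StronglyMeasurable[ℱ k] (β k) := fun k =>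
    (((hA_sm (k + 1) k le_rfl).measurable.inv).mul (hb'_sm k).measurable).stronglyMeasurable
  have hψ_sm : ∀ k, StronglyMeasurable[ℱ k] (ψ k) := fun k =>
    (((hA_sm (k + 1) k le_rfl).measurable.inv).mul (hφ'_sm k).measurable).stronglyMeasurable
  have hS_sm : ∀ n k, n ≤ k + 1 → StronglyMeasurable[ℱ k] (S n) := by
    intro n k hnk
    have : S n = fun ω => ∑ j ∈ Finset.range n, β j ω := rfl
    rw [this]
    refine Finset.stronglyMeasurable_fun_sum _ fun j hj => ?_
    have hjk : j ≤ k := Nat.lt_succ_iff.mp (lt_of_lt_of_le (Finset.mem_range.mp hj) hnk)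
    exact (hβ_sm j).mono (ℱ.mono hjk)
  have hP_sm : ∀ n k, n ≤ k + 1 → StronglyMeasurable[ℱ k] (P n) := by
    intro n k hnk
    have : P n = fun ω => ∑ j ∈ Finset.range n, ψ j ω := rfl
    rw [this]
    refine Finset.stronglyMeasurable_fun_sum _ fun j hj => ?_
    have hjk : j ≤ k := Nat.lt_succ_iff.mp (lt_of_lt_of_le (Finset.mem_range.mp hj) hnk)
    exact (hψ_sm j).mono (ℱ.mono hjk)
  have hX_sm : ∀ k, StronglyMeasurable[ℱ k] (X k) := fun k =>
    ((hu_sm k).add (hP_sm k k (Nat.le_succ _))).sub (hS_sm k k (Nat.le_succ _))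
  -- integrability
  have hAinv_le_one : ∀ k ω, (A k ω)⁻¹ ≤ 1 := fun k ω => inv_le_one_of_one_le₀ (hA1 k ω)
  have hu_nonneg : ∀ k ω, 0 ≤ u k ω := fun k ω =>
    mul_nonneg (inv_nonneg.mpr (hApos k ω).le) (hv'_nonneg k ω)
  have hβ_nonneg : ∀ k ω, 0 ≤ β k ω := fun k ω =>
    mul_nonneg (inv_nonneg.mpr (hApos (k + 1) ω).le) (hb'_nonneg k ω)
  have hψ_nonneg : ∀ k ω, 0 ≤ ψ k ω := fun k ω =>
    mul_nonneg (inv_nonneg.mpr (hApos (k + 1) ω).le) (hφ'_nonneg k ω)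
  have hu_le : ∀ k ω, u k ω ≤ v' k ω := fun k ω =>
    mul_le_of_le_one_left (hv'_nonneg k ω) (hAinv_le_one k ω)
  have hβ_le : ∀ k ω, β k ω ≤ b' k ω := fun k ω =>
    mul_le_of_le_one_left (hb'_nonneg k ω) (hAinv_le_one (k + 1) ω)
  have hψ_le : ∀ k ω, ψ k ω ≤ φ' k ω := fun k ω =>
    mul_le_of_le_one_left (hφ'_nonneg k ω) (hAinv_le_one (k + 1) ω)
  have hu_int : ∀ k, Integrable (u k) μ := by
    intro k
    refine Integrable.mono' (hv_int k).pos_part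
      (((hu_sm k).mono (ℱ.le k)).aestronglyMeasurable) (Eventually.of_forall fun ω => ?_)
    rw [Real.norm_eq_abs, abs_of_nonneg (hu_nonneg k ω)]
    exact hu_le k ω
  have hβ_int : ∀ k, Integrable (β k) μ := by
    intro k
    refine Integrable.mono' (hb_int k).pos_part
      (((hβ_sm k).mono (ℱ.le k)).aestronglyMeasurable) (Eventually.of_forall fun ω => ?_)
    rw [Real.norm_eq_abs, abs_of_nonneg (hβ_nonneg k ω)]
    exact hβ_le k ω
  have hψ_int : ∀ k, Integrable (ψ k) μ := by
    intro k
    refine Integrable.mono' (hφ_int k).pos_part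
      (((hψ_sm k).mono (ℱ.le k)).aestronglyMeasurable) (Eventually.of_forall fun ω => ?_)
    rw [Real.norm_eq_abs, abs_of_nonneg (hψ_nonneg k ω)]
    exact hψ_le k ω
  have hS_int : ∀ n, Integrable (S n) μ := fun n =>
    integrable_finset_sum _ fun j _ => hβ_int j
  have hP_int : ∀ n, Integrable (P n) μ := fun n =>
    integrable_finset_sum _ fun j _ => hψ_int j
  have hX_int : ∀ k, Integrable (X k) μ := fun k =>
    ((hu_int k).add (hP_int k)).sub (hS_int k)
  -- a.e. nonnegativity of the original processes
  have hae : ∀ᵐ ω ∂μ, ∀ k, 0 ≤ v k ω ∧ 0 ≤ a k ω ∧ 0 ≤ b k ω ∧ 0 ≤ φ k ω := by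
    rw [ae_all_iff]
    intro k
    filter_upwards [hv_nonneg k, ha_nonneg k, hb_nonneg k, hφ_nonneg k] with ω h1 h2 h3 h4
    exact ⟨h1, h2, h3, h4⟩
  have hv'_eq : ∀ k, v' k =ᵐ[μ] v k := fun k =>
    (hv_nonneg k).mono fun ω h => max_eq_left h
  -- key conditional expectation inequality for the normalized process
  have hu_ce : ∀ k, μ[u (k + 1)|ℱ k] ≤ᵐ[μ] fun ω => u k ω + β k ω - ψ k ω := by
    intro k
    have h1 : u (k + 1) = (fun ω => (A (k + 1) ω)⁻¹) * v' (k + 1) := rfl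
    have hmul : μ[u (k + 1)|ℱ k] =ᵐ[μ]
        (fun ω => (A (k + 1) ω)⁻¹) * μ[v' (k + 1)|ℱ k] := by
      rw [h1]
      exact condExp_mul_of_stronglyMeasurable_left
        ((hA_sm (k + 1) k le_rfl).measurable.inv.stronglyMeasurable)
        (by rw [← h1]; exact hu_int (k + 1)) (hv_int (k + 1)).pos_part
    have hce_eq : μ[v' (k + 1)|ℱ k] =ᵐ[μ] μ[v (k + 1)|ℱ k] := condExp_congr_ae (hv'_eq (k + 1))
    filter_upwards [hmul, hce_eq, hrec k, hae] with ω e1 e2 e3 e4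
    simp only [Pi.mul_apply] at e1
    rw [e1, e2]
    refine le_trans (mul_le_mul_of_nonneg_left e3 (inv_nonneg.mpr (hApos _ ω).le))
      (le_of_eq ?_)
    have q1 : a' k ω = a k ω := max_eq_left (e4 k).2.1
    have q2 : v' k ω = v k ω := max_eq_left (e4 k).1
    have q3 : b' k ω = b k ω := max_eq_left (e4 k).2.2.1
    have q4 : φ' k ω = φ k ω := max_eq_left (e4 k).2.2.2
    have hAk : A k ω ≠ 0 := (hApos k ω).ne'
    have hak : (1 : ℝ) + a k ω ≠ 0 := by linarith [(e4 k).2.1]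
    simp only [hudef, hβdef, hψdef, hAsucc' k ω, q1, q2, q3, q4]
    field_simp
  -- X is a supermartingale
  have hX_ce : ∀ k, μ[X (k + 1)|ℱ k] ≤ᵐ[μ] X k := by
    intro k
    have hXsplit : X (k + 1) = u (k + 1) + fun ω => P (k + 1) ω - S (k + 1) ω := by
      funext ω; simp only [hXdef, Pi.add_apply]; ring
    have hg_int : Integrable (fun ω => P (k + 1) ω - S (k + 1) ω) μ :=
      (hP_int _).sub (hS_int _)
    have hg_sm : StronglyMeasurable[ℱ k] fun ω => P (k + 1) ω - S (k + 1) ω :=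
      (hP_sm (k + 1) k le_rfl).sub (hS_sm (k + 1) k le_rfl)
    have h1 : μ[X (k + 1)|ℱ k] =ᵐ[μ]
        μ[u (k + 1)|ℱ k] + fun ω => P (k + 1) ω - S (k + 1) ω := by
      rw [hXsplit]
      refine (condExp_add (hu_int _) hg_int _).trans ?_
      rw [condExp_of_stronglyMeasurable (ℱ.le k) hg_sm hg_int]
    filter_upwards [h1, hu_ce k] with ω e1 e2
    have hP1 : P (k + 1) ω = P k ω + ψ k ω := Finset.sum_range_succ _ _
    have hS1 : S (k + 1) ω = S k ω + β k ω := Finset.sum_range_succ _ _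
    have hXk : X k ω = u k ω + P k ω - S k ω := rfl
    rw [e1]
    simp only [Pi.add_apply]
    rw [hXk]
    linarith [e2]
  have hX_super : Supermartingale X ℱ μ := supermartingale_nat hX_sm hX_int hX_ce
  -- pointwise facts about S, P, X
  have hS_mono : ∀ ω, Monotone fun n => S n ω := by
    intro ω
    refine monotone_nat_of_le_succ fun n => ?_
    have : S (n + 1) ω = S n ω + β n ω := Finset.sum_range_succ _ _
    rw [this]; linarith [hβ_nonneg n ω]
  have hS0 : ∀ ω, S 0 ω = 0 := fun ω => Finset.sum_range_zero _
  have hP_nonneg : ∀ n ω, 0 ≤ P n ω := fun n ω =>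
    Finset.sum_nonneg fun j _ => hψ_nonneg j ω
  have hS_nonneg : ∀ n ω, 0 ≤ S n ω := fun n ω =>
    Finset.sum_nonneg fun j _ => hβ_nonneg j ω
  have hX_ge : ∀ k ω, -(S k ω) ≤ X k ω := by
    intro k ω
    have : X k ω = u k ω + P k ω - S k ω := rfl
    rw [this]; linarith [hu_nonneg k ω, hP_nonneg k ω]
  -- the stopped process
  set YP : ℕ → ℕ → Ω → ℝ :=
    fun M k ω => RSaux.Y (fun n => X n ω) (fun n => S n ω) (M : ℝ) k with hYPdef
  have hYP0 : ∀ M : ℕ, YP M 0 = X 0 := fun M => rfl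
  have hYP_succ : ∀ (M : ℕ) k, YP M (k + 1) =
      fun ω => YP M k ω + (if S (k + 1) ω ≤ (M : ℝ) then X (k + 1) ω - X k ω else 0) :=
    fun M k => rfl
  have hYP_lb : ∀ (M : ℕ) k ω, -(M : ℝ) ≤ YP M k ω := fun M k ω =>
    RSaux.Y_ge (hS_mono ω) (Nat.cast_nonneg M) (hS0 ω) (fun n => hX_ge n ω) k
  have hE_meas : ∀ (M : ℕ) k, MeasurableSet[ℱ k] {ω | S (k + 1) ω ≤ (M : ℝ)} := fun M k =>
    measurableSet_le (hS_sm (k + 1) k le_rfl).measurable measurable_const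
  have hYP_sm : ∀ (M : ℕ) k, StronglyMeasurable[ℱ k] (YP M k) := by
    intro M k
    induction k with
    | zero => exact hX_sm 0
    | succ k ih =>
      rw [hYP_succ M k]
      refine Measurable.stronglyMeasurable ?_
      refine Measurable.add ((ih.mono (ℱ.mono (Nat.le_succ k))).measurable) ?_
      refine Measurable.ite ((ℱ.mono (Nat.le_succ k)) _ (hE_meas M k)) ?_ measurable_const
      exact ((hX_sm (k + 1)).measurable.sub
        (((hX_sm k).mono (ℱ.mono (Nat.le_succ k))).measurable))
  have hYP_int : ∀ (M : ℕ) k, Integrable (YP M k) μ := by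
    intro M k
    induction k with
    | zero => exact hX_int 0
    | succ k ih =>
      rw [hYP_succ M k]
      refine Integrable.add ih ?_
      have heq : (fun ω => if S (k + 1) ω ≤ (M : ℝ) then X (k + 1) ω - X k ω else 0) =
          Set.indicator {ω | S (k + 1) ω ≤ (M : ℝ)} (fun ω => X (k + 1) ω - X k ω) := by
        funext ω
        rw [Set.indicator_apply]
        congr 1
      rw [heq]
      exact (((hX_int (k + 1)).sub (hX_int k))).indicator
        (ℱ.le k _ (hE_meas M k))
  have hYP_ce : ∀ (M : ℕ) k, μ[YP M (k + 1)|ℱ k] ≤ᵐ[μ] YP M k := by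
    intro M k
    set χ : Ω → ℝ := fun ω => if S (k + 1) ω ≤ (M : ℝ) then (1 : ℝ) else 0 with hχdef
    have hχ_nonneg : ∀ ω, 0 ≤ χ ω := by
      intro ω; rw [hχdef]; dsimp only; split <;> norm_num
    have hχ_sm : StronglyMeasurable[ℱ k] χ :=
      (Measurable.ite (hE_meas M k) measurable_const measurable_const).stronglyMeasurable
    have hsplit : YP M (k + 1) = YP M k + χ * (X (k + 1) - X k) := by
      funext ω
      rw [hYP_succ M k]
      simp only [Pi.add_apply, Pi.mul_apply, Pi.sub_apply, hχdef]
      split <;> ring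
    have hF_int : Integrable (X (k + 1) - X k) μ := (hX_int (k + 1)).sub (hX_int k)
    have hχF_int : Integrable (χ * (X (k + 1) - X k)) μ := by
      refine Integrable.bdd_mul hF_int
        ((hχ_sm.mono (ℱ.le k)).aestronglyMeasurable) (c := 1) (Eventually.of_forall fun ω => ?_)
      rw [hχdef]; dsimp only; split <;> simp
    have h1 : μ[YP M (k + 1)|ℱ k] =ᵐ[μ] YP M k + χ * μ[X (k + 1) - X k|ℱ k] := by
      rw [hsplit]
      refine (condExp_add (hYP_int M k) hχF_int _).trans ?_
      rw [condExp_of_stronglyMeasurable (ℱ.le k) (hYP_sm M k) (hYP_int M k)]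
      exact EventuallyEq.add EventuallyEq.rfl
        (condExp_mul_of_stronglyMeasurable_left hχ_sm hχF_int hF_int)
    have h2 : μ[X (k + 1) - X k|ℱ k] ≤ᵐ[μ] 0 := by
      refine (condExp_sub (hX_int (k + 1)) (hX_int k) _).le.trans ?_
      rw [condExp_of_stronglyMeasurable (ℱ.le k) (hX_sm k) (hX_int k)]
      filter_upwards [hX_ce k] with ω h
      simpa using h
    filter_upwards [h1, h2] with ω e1 e2
    rw [e1]
    simp only [Pi.add_apply, Pi.mul_apply]
    have : χ ω * (μ[X (k + 1) - X k|ℱ k]) ω ≤ 0 :=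
      mul_nonpos_of_nonneg_of_nonpos (hχ_nonneg ω) (by simpa using e2)
    linarith
  have hYP_super : ∀ M : ℕ, Supermartingale (YP M) ℱ μ := fun M =>
    supermartingale_nat (hYP_sm M) (hYP_int M) (hYP_ce M)
  -- uniform L¹ bound and a.e. convergence of the stopped processes
  have hint_le : ∀ (M : ℕ) k, ∫ ω, YP M k ω ∂μ ≤ ∫ ω, X 0 ω ∂μ := by
    intro M k
    have h0 : ∫ ω, YP M k ω ∂μ = ∫ ω, (μ[YP M k|ℱ 0]) ω ∂μ :=
      (integral_condExp (ℱ.le 0)).symm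
    rw [h0, ← hYP0 M]
    exact integral_mono_ae integrable_condExp (hYP_int M 0)
      ((hYP_super M).2.1 0 k (Nat.zero_le _))
  have habs_le : ∀ (M : ℕ) k, ∫ ω, ‖YP M k ω‖ ∂μ ≤ ∫ ω, X 0 ω ∂μ + 2 * M := by
    intro M k
    have hptw : ∀ ω, ‖YP M k ω‖ ≤ YP M k ω + 2 * M := by
      intro ω
      rw [Real.norm_eq_abs, abs_le]
      constructor <;> [skip; skip] <;> nlinarith [hYP_lb M k ω]
    calc ∫ ω, ‖YP M k ω‖ ∂μ ≤ ∫ ω, (YP M k ω + 2 * M) ∂μ :=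
          integral_mono_ae (hYP_int M k).norm ((hYP_int M k).add (integrable_const _))
            (Eventually.of_forall hptw)
      _ = ∫ ω, YP M k ω ∂μ + 2 * M := by
          rw [integral_add (hYP_int M k) (integrable_const _), integral_const]
          simp
      _ ≤ ∫ ω, X 0 ω ∂μ + 2 * M := by linarith [hint_le M k]
  have hconv : ∀ M : ℕ, ∀ᵐ ω ∂μ, ∃ c, Tendsto (fun k => YP M k ω) atTop (nhds c) := by
    intro M
    set R : NNReal := (∫ ω, X 0 ω ∂μ + 2 * M).toNNReal with hRdef
    have hbdd : ∀ k, eLpNorm ((-(YP M)) k) 1 μ ≤ (R : ENNReal) := by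
      intro k
      have hneg : (-(YP M)) k = -(YP M k) := rfl
      rw [hneg, eLpNorm_neg]
      have he : eLpNorm (YP M k) 1 μ = ENNReal.ofReal (∫ ω, ‖YP M k ω‖ ∂μ) := by
        rw [eLpNorm_one_eq_lintegral_enorm,
          ofReal_integral_norm_eq_lintegral_enorm (hYP_int M k)]
      rw [he]
      have : (R : ENNReal) = ENNReal.ofReal (∫ ω, X 0 ω ∂μ + 2 * M) := rfl
      rw [this]
      exact ENNReal.ofReal_le_ofReal (habs_le M k)
    have hsub : Submartingale (-(YP M)) ℱ μ := (hYP_super M).neg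
    filter_upwards [hsub.exists_ae_tendsto_of_bdd hbdd] with ω ⟨c, hc⟩
    refine ⟨-c, ?_⟩
    have : (fun k => YP M k ω) = fun k => -((-(YP M)) k ω) := by
      funext k; simp
    rw [this]
    exact hc.neg
  -- final pointwise argument
  filter_upwards [hae, ha_sum, hb_sum, ae_all_iff.mpr hconv] with ω hω hasum hbsum hYconv
  have ea : ∀ k, a' k ω = a k ω := fun k => max_eq_left (hω k).2.1
  have ev : ∀ k, v' k ω = v k ω := fun k => max_eq_left (hω k).1
  have eb : ∀ k, b' k ω = b k ω := fun k => max_eq_left (hω k).2.2.1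
  have eφ : ∀ k, φ' k ω = φ k ω := fun k => max_eq_left (hω k).2.2.2
  have hβsum : Summable fun k => β k ω :=
    Summable.of_nonneg_of_le (fun k => hβ_nonneg k ω)
      (fun k => (hβ_le k ω).trans_eq (eb k)) hbsum
  have hSle : ∀ n, S n ω ≤ ∑' k, b k ω := by
    intro n
    have h1 : S n ω ≤ ∑ j ∈ Finset.range n, b j ω :=
      Finset.sum_le_sum fun j _ => (hβ_le j ω).trans_eq (eb j)
    exact h1.trans (hbsum.sum_le_tsum _ (fun j _ => (hω j).2.2.1))
  set M : ℕ := Nat.ceil (∑' k, b k ω) with hMdef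
  have hMle : ∀ n, S n ω ≤ (M : ℝ) := fun n => (hSle n).trans (Nat.le_ceil _)
  have hXeq : ∀ k, YP M k ω = X k ω := fun k =>
    RSaux.Y_eq_of_le (hS_mono ω) k (hMle k)
  obtain ⟨c, hc⟩ := hYconv M
  have hXconv : Tendsto (fun k => X k ω) atTop (nhds c) := by
    refine hc.congr fun k => hXeq k
  obtain ⟨C, hC⟩ := hXconv.bddAbove_range
  have hCle : ∀ k, X k ω ≤ C := fun k => hC (Set.mem_range_self k)
  -- summability of ψ
  have hψsum : Summable fun k => ψ k ω := by
    refine summable_of_sum_range_le (c := C + M) (fun k => hψ_nonneg k ω) fun n => ?_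
    have hPn : P n ω = ∑ j ∈ Finset.range n, ψ j ω := rfl
    have hXn : X n ω = u n ω + P n ω - S n ω := rfl
    have := hCle n
    have := hu_nonneg n ω
    have := hS_nonneg n ω
    have := hMle n
    rw [← hPn]
    linarith
  have hStend : Tendsto (fun n => S n ω) atTop (nhds (∑' k, β k ω)) :=
    hβsum.hasSum.tendsto_sum_nat
  have hPtend : Tendsto (fun n => P n ω) atTop (nhds (∑' k, ψ k ω)) :=
    hψsum.hasSum.tendsto_sum_nat
  have hutend : Tendsto (fun k => u k ω) atTop
      (nhds (c - (∑' k, ψ k ω) + ∑' k, β k ω)) := by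
    have h1 : (fun k => u k ω) = fun k => X k ω - P k ω + S k ω := by
      funext k
      have : X k ω = u k ω + P k ω - S k ω := rfl
      linarith
    rw [h1]
    exact (hXconv.sub hPtend).add hStend
  -- convergence of A
  have hAbdd : BddAbove (Set.range fun k => A k ω) := by
    refine ⟨Real.exp (∑' k, a k ω), ?_⟩
    rintro x ⟨k, rfl⟩
    have h1 : A k ω ≤ ∏ j ∈ Finset.range k, Real.exp (a j ω) := by
      have : A k ω = ∏ j ∈ Finset.range k, (1 + a j ω) := by
        simp only [hAdef]
        exact Finset.prod_congr rfl fun j _ => by rw [ea j]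
      rw [this]
      refine Finset.prod_le_prod (fun j _ => by linarith [(hω j).2.1]) fun j _ => ?_
      rw [add_comm]
      exact Real.add_one_le_exp _
    rw [← Real.exp_sum] at h1
    exact h1.trans (Real.exp_le_exp.mpr
      (hasum.sum_le_tsum _ (fun j _ => (hω j).2.1)))
  set L : ℝ := ⨆ k, A k ω with hLdef
  have hAtend : Tendsto (fun k => A k ω) atTop (nhds L) :=
    tendsto_atTop_ciSup (hAmono ω) hAbdd
  have hLk : ∀ k, A k ω ≤ L := fun k => le_ciSup hAbdd k
  constructor
  · refine ⟨(c - (∑' k, ψ k ω) + ∑' k, β k ω) * L, ?_⟩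
    have h1 : (fun k => v k ω) = fun k => u k ω * A k ω := by
      funext k
      have hne : A k ω ≠ 0 := (hApos k ω).ne'
      have : u k ω = (A k ω)⁻¹ * v' k ω := rfl
      rw [this, ev k]
      field_simp
    rw [h1]
    exact hutend.mul hAtend
  · refine Summable.of_nonneg_of_le (fun k => (hω k).2.2.2) (fun k => ?_)
      (hψsum.mul_right L)
    have hψA : ψ k ω * A (k + 1) ω = φ' k ω := by
      have : ψ k ω = (A (k + 1) ω)⁻¹ * φ' k ω := rfl
      rw [this, inv_mul_eq_div, div_mul_cancel₀ _ (hApos (k + 1) ω).ne']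
    have : φ k ω = ψ k ω * A (k + 1) ω := by rw [hψA, eφ k]
    rw [this]
    exact mul_le_mul_of_nonneg_left (hLk (k + 1)) (hψ_nonneg k ω)
end
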